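/- arXiv:1608.01564 — 4 statements merged into one kernel-verified Lean document; each statement's English description precedes it below -/
import Mathlib

section
/- Let H_n denote the physicists' Hermite polynomials (orthogonal on ℝ with weight e^{−t²}, leading coefficient 2ⁿ). For nonnegative integers x ≠ y and any real r, ∫_r^∞ H_x(t) H_y(t) e^{−t²} dt = −(1/2) e^{−r²} (H_{x+1}(r) H_y(r) − H_x(r) H_{y+1}(r)) / (x − y). -/
/-- The physicists' Hermite polynomials `H_n`, defined by `H_0 = 1`, `H_1 = 2t`,
`H_{n+2}(t) = 2t H_{n+1}(t) − 2(n+1) H_n(t)`; these are orthogonal on `ℝ` with weight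
`e^{−t²}` and have leading coefficient `2ⁿ`. -/
noncomputable def hermiteH : ℕ → ℝ → ℝ
  | 0, _ => 1
  | 1, t => 2 * t
  | n + 2, t => 2 * t * hermiteH (n + 1) t - 2 * ((n : ℝ) + 1) * hermiteH n t

open Polynomial MeasureTheory Set Filter Topology Real

noncomputable def hermitePoly : ℕ → Polynomial ℝ
  | 0 => 1
  | 1 => Polynomial.C 2 * Polynomial.X
  | n + 2 => Polynomial.C 2 * Polynomial.X * hermitePoly (n + 1)
      - Polynomial.C (2 * ((n : ℝ) + 1)) * hermitePoly n

lemma hermiteH_eval : ∀ (n : ℕ) (t : ℝ), hermiteH n t = (hermitePoly n).eval t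
  | 0, t => by simp [hermiteH, hermitePoly]
  | 1, t => by simp [hermiteH, hermitePoly]
  | n + 2, t => by
      simp [hermiteH, hermitePoly, hermiteH_eval (n + 1) t, hermiteH_eval n t]

lemma hermiteH_continuous (n : ℕ) : Continuous (hermiteH n) := by
  have : hermiteH n = fun t => (hermitePoly n).eval t := funext (hermiteH_eval n)
  rw [this]; exact (hermitePoly n).continuous

lemma hermiteH_hasDerivAt : ∀ (n : ℕ) (t : ℝ),
    HasDerivAt (hermiteH n) (2 * t * hermiteH n t - hermiteH (n + 1) t) t
  | 0, t => by
      have h : HasDerivAt (hermiteH 0) 0 t := hasDerivAt_const t 1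
      convert h using 1
      simp [hermiteH]
  | 1, t => by
      have h : HasDerivAt (hermiteH 1) 2 t := by
        exact (by simpa using ((hasDerivAt_id t).const_mul (2 : ℝ)) : HasDerivAt (fun y : ℝ => 2 * y) 2 t)
      convert h using 1
      show 2 * t * (2 * t) - (2 * t * hermiteH 1 t - 2 * ((0 : ℕ) + 1 : ℝ) * hermiteH 0 t) = 2
      simp [hermiteH]
  | n + 2, t => by
      have h1 := hermiteH_hasDerivAt (n + 1) t
      have h0 := hermiteH_hasDerivAt n t
      have h : HasDerivAt (hermiteH (n + 2))
          (2 * hermiteH (n + 1) t + 2 * t * (2 * t * hermiteH (n + 1) t - hermiteH (n + 2) t)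
            - 2 * ((n : ℝ) + 1) * (2 * t * hermiteH n t - hermiteH (n + 1) t)) t := by
        have : hermiteH (n + 2) = fun t =>
            2 * t * hermiteH (n + 1) t - 2 * ((n : ℝ) + 1) * hermiteH n t := funext fun _ => rfl
        rw [this]
        have ha : HasDerivAt (fun t : ℝ => 2 * t * hermiteH (n + 1) t)
            (2 * hermiteH (n + 1) t + 2 * t * (2 * t * hermiteH (n + 1) t - hermiteH (n + 2) t))
            t := by
          have h1' : HasDerivAt (hermiteH (n + 1)) (2 * t * hermiteH (n + 1) t - hermiteH (n + 2) t) t := h1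
          exact (((hasDerivAt_id t).const_mul (2 : ℝ)).mul h1').congr_deriv (by simp only [id_eq]; ring)
        exact ha.sub (h0.const_mul _)
      convert h using 1
      have e3 : hermiteH (n + 2 + 1) t
          = 2 * t * hermiteH (n + 2) t - 2 * (((n + 1 : ℕ) : ℝ) + 1) * hermiteH (n + 1) t := rfl
      have e2 : hermiteH (n + 2) t
          = 2 * t * hermiteH (n + 1) t - 2 * ((n : ℝ) + 1) * hermiteH n t := rfl
      push_cast at e3
      rw [e3, e2]; ring

lemma poly_mul_exp_tendsto (p : Polynomial ℝ) :
    Tendsto (fun t : ℝ => p.eval t * Real.exp (-t ^ 2)) atTop (𝓝 0) := by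
  apply squeeze_zero_norm' (a := fun t => |p.eval t / Real.exp t|)
  · filter_upwards [eventually_ge_atTop (1 : ℝ)] with t ht
    rw [Real.norm_eq_abs, abs_mul, abs_div, abs_of_pos (Real.exp_pos _),
      abs_of_pos (Real.exp_pos _), div_eq_mul_inv, ← Real.exp_neg]
    exact mul_le_mul_of_nonneg_left (Real.exp_le_exp.2 (by nlinarith)) (abs_nonneg _)
  · simpa using (p.tendsto_div_exp_atTop).abs

lemma poly_mul_exp_integrableOn (p : Polynomial ℝ) (r : ℝ) :
    IntegrableOn (fun t : ℝ => p.eval t * Real.exp (-t ^ 2)) (Ioi r) := by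
  apply integrable_of_isBigO_exp_neg (b := 1) one_pos
  · exact (p.continuous.mul (Real.continuous_exp.comp (continuous_pow 2).neg)).continuousOn
  apply Asymptotics.IsLittleO.isBigO
  rw [Asymptotics.isLittleO_iff_tendsto (fun t h => absurd h (Real.exp_ne_zero _))]
  have key : ∀ t : ℝ, p.eval t * Real.exp (-t ^ 2) / Real.exp (-1 * t)
      = p.eval t * Real.exp (t - t ^ 2) := by
    intro t
    rw [div_eq_mul_inv, ← Real.exp_neg, mul_assoc, ← Real.exp_add]
    ring_nf
  simp only [key]
  apply squeeze_zero_norm' (a := fun t => Real.exp 2 * |p.eval t / Real.exp t|)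
  · filter_upwards with t
    rw [Real.norm_eq_abs, abs_mul, abs_of_pos (Real.exp_pos _), abs_div,
      abs_of_pos (Real.exp_pos _), div_eq_mul_inv, ← Real.exp_neg,
      mul_comm (Real.exp 2), mul_assoc, ← Real.exp_add]
    exact mul_le_mul_of_nonneg_left (Real.exp_le_exp.2 (by nlinarith [sq_nonneg (t - 1)]))
      (abs_nonneg _)
  · simpa using ((p.tendsto_div_exp_atTop).abs.const_mul (Real.exp 2))

/-- For `x ≠ y` and any real `r`,
`∫_r^∞ H_x H_y e^{−t²} dt = −(1/2) e^{−r²} (H_{x+1}(r)H_y(r) − H_x(r)H_{y+1}(r))/(x−y)`. -/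
theorem hermite_tail_integral (x y : ℕ) (hxy : x ≠ y) (r : ℝ) :
    ∫ t in Set.Ioi r, hermiteH x t * hermiteH y t * Real.exp (-t ^ 2)
      = -(1 / 2) * Real.exp (-r ^ 2) *
          ((hermiteH (x + 1) r * hermiteH y r - hermiteH x r * hermiteH (y + 1) r)
            / ((x : ℝ) - y)) := by
  have hXY : (x : ℝ) - y ≠ 0 := sub_ne_zero.2 (by exact_mod_cast hxy)
  set F : ℝ → ℝ := fun t =>
    (hermiteH (x + 1) t * hermiteH y t - hermiteH x t * hermiteH (y + 1) t) *
      Real.exp (-t ^ 2) with hF_def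
  have hexp : ∀ t : ℝ, HasDerivAt (fun t : ℝ => Real.exp (-t ^ 2))
      (-(2 * t) * Real.exp (-t ^ 2)) t := by
    intro t
    have h1 : HasDerivAt (fun t : ℝ => -t ^ 2) (-(2 * t)) t := by
      exact (hasDerivAt_pow 2 t).neg.congr_deriv (by norm_num)
    simpa [mul_comm] using h1.exp
  have hF : ∀ t : ℝ, HasDerivAt F
      (2 * ((x : ℝ) - y) * (hermiteH x t * hermiteH y t * Real.exp (-t ^ 2))) t := by
    intro t
    have hW : HasDerivAt
        (fun t => hermiteH (x + 1) t * hermiteH y t - hermiteH x t * hermiteH (y + 1) t)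
        ((2 * t * hermiteH (x + 1) t - hermiteH (x + 1 + 1) t) * hermiteH y t
            + hermiteH (x + 1) t * (2 * t * hermiteH y t - hermiteH (y + 1) t)
          - ((2 * t * hermiteH x t - hermiteH (x + 1) t) * hermiteH (y + 1) t
            + hermiteH x t * (2 * t * hermiteH (y + 1) t - hermiteH (y + 1 + 1) t))) t :=
      ((hermiteH_hasDerivAt (x + 1) t).mul (hermiteH_hasDerivAt y t)).sub
        ((hermiteH_hasDerivAt x t).mul (hermiteH_hasDerivAt (y + 1) t))
    have h := hW.mul (hexp t)
    refine h.congr_deriv ?_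
    have ex : hermiteH (x + 1 + 1) t
        = 2 * t * hermiteH (x + 1) t - 2 * ((x : ℝ) + 1) * hermiteH x t := rfl
    have ey : hermiteH (y + 1 + 1) t
        = 2 * t * hermiteH (y + 1) t - 2 * ((y : ℝ) + 1) * hermiteH y t := rfl
    rw [ex, ey]; ring
  have hInt : IntegrableOn
      (fun t => 2 * ((x : ℝ) - y) * (hermiteH x t * hermiteH y t * Real.exp (-t ^ 2)))
      (Ioi r) := by
    have := poly_mul_exp_integrableOn
      (Polynomial.C (2 * ((x : ℝ) - y)) * hermitePoly x * hermitePoly y) r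
    apply this.congr_fun _ measurableSet_Ioi
    intro t _
    simp [hermiteH_eval]; ring
  have hTend : Tendsto F atTop (𝓝 0) := by
    have := poly_mul_exp_tendsto
      (hermitePoly (x + 1) * hermitePoly y - hermitePoly x * hermitePoly (y + 1))
    apply this.congr
    intro t
    simp [hF_def, hermiteH_eval]
  have key : ∫ t in Ioi r,
      2 * ((x : ℝ) - y) * (hermiteH x t * hermiteH y t * Real.exp (-t ^ 2)) = 0 - F r :=
    integral_Ioi_of_hasDerivAt_of_tendsto' (fun t _ => hF t) hInt hTend
  rw [integral_const_mul] at key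
  have h2 : (2 : ℝ) * ((x : ℝ) - y) ≠ 0 := mul_ne_zero two_ne_zero hXY
  have hI : (∫ t in Ioi r, hermiteH x t * hermiteH y t * Real.exp (-t ^ 2))
      = (0 - F r) / (2 * ((x : ℝ) - y)) :=
    (eq_div_iff h2).2 (by rw [mul_comm]; exact key)
  rw [hI, hF_def]
  field_simp
  ring
end

section
/- A Jacobi matrix A on ℓ²(ℤ_{≥0}) (real symmetric tridiagonal with positive off-diagonal entries A(x,x+1)) satisfying Σ_{x≥0} 1/A(x,x+1) = +∞ defines an essentially self-adjoint operator on the dense subspace ℓ²₀ of finitely supported sequences. -/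
open Filter

namespace CarlemanAux

noncomputable def W (a b : ℕ → ℝ) (u : ℕ → ℝ) : ℕ → ℝ := fun n =>
  a n * u (n+1) + b n * u n + if n = 0 then 0 else a (n-1) * u (n-1)

lemma wronskian (a b u v : ℕ → ℝ) (N : ℕ) :
    ∑ n ∈ Finset.range (N+1), (W a b u n * v n - u n * W a b v n)
      = a N * (u (N+1) * v N - u N * v (N+1)) := by
  induction N with
  | zero => simp [W]; ring
  | succ N ih =>
      rw [Finset.sum_range_succ, ih]
      simp [W, Nat.succ_sub_one]
      ring

lemma sq_summable {u : ℕ → ℝ} (hu : Memℓp u 2) : Summable fun n => u n ^ 2 := by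
  have h := hu.summable (p := 2) (by norm_num)
  convert h using 2 with n
  rw [Real.norm_eq_abs, ENNReal.toReal_ofNat, Real.rpow_two, sq_abs]

lemma prod_summable {u v : ℕ → ℝ} (hu : Summable fun n => u n ^ 2)
    (hv : Summable fun n => v n ^ 2) : Summable fun n => |u n| * |v n| := by
  refine Summable.of_nonneg_of_le (fun n => by positivity)
    (fun n => ?_) (((hu.add hv).div_const 2))
  nlinarith [sq_abs (u n), sq_abs (v n), sq_nonneg (|u n| - |v n|)]

lemma key (a b : ℕ → ℝ) (ha : ∀ n, 0 < a n)
    (hdiv : Tendsto (fun N : ℕ => ∑ n ∈ Finset.range N, (a n)⁻¹) atTop atTop)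
    (u v : ℕ → ℝ) (hu : Memℓp u 2) (hv : Memℓp v 2)
    (h1 : Summable fun n => W a b u n * v n) (h2 : Summable fun n => u n * W a b v n) :
    ∑' n, W a b u n * v n = ∑' n, u n * W a b v n := by
  have hd : Summable fun n => W a b u n * v n - u n * W a b v n := h1.sub h2
  obtain ⟨c, hc⟩ : ∃ c : ℝ, c = ∑' n, (W a b u n * v n - u n * W a b v n) := ⟨_, rfl⟩
  have htend : Tendsto (fun N : ℕ => a N * (u (N+1) * v N - u N * v (N+1))) atTop (nhds c) := by
    have := hc ▸ hd.hasSum.tendsto_sum_nat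
    have h' : Tendsto (fun N : ℕ => ∑ n ∈ Finset.range (N+1),
        (W a b u n * v n - u n * W a b v n)) atTop (nhds c) :=
      this.comp (tendsto_add_atTop_nat 1)
    simpa only [wronskian] using h'
  have hc0 : c = 0 := by
    by_contra hc0
    have hcpos : 0 < |c| := abs_pos.mpr hc0
    have hev : ∀ᶠ N : ℕ in atTop, |c| / 2 ≤ |a N * (u (N+1) * v N - u N * v (N+1))| :=
      htend.abs.eventually (eventually_ge_nhds (by linarith))
    obtain ⟨N₀, hN₀⟩ := hev.exists_forall_of_atTop
    have hbound : ∀ N ≥ N₀, (a N)⁻¹ ≤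
        2 / |c| * (|u (N+1)| * |v N| + |u N| * |v (N+1)|) := by
      intro N hN
      have h1 := hN₀ N hN
      have haN := ha N
      rw [abs_mul, abs_of_pos haN] at h1
      have h2 : |u (N+1) * v N - u N * v (N+1)| ≤ |u (N+1)| * |v N| + |u N| * |v (N+1)| := by
        calc |u (N+1) * v N - u N * v (N+1)| ≤ |u (N+1) * v N| + |u N * v (N+1)| :=
              abs_sub (u (N+1) * v N) (u N * v (N+1))
          _ = |u (N+1)| * |v N| + |u N| * |v (N+1)| := by rw [abs_mul, abs_mul]
      have h3 : |c| / 2 ≤ a N * (|u (N+1)| * |v N| + |u N| * |v (N+1)|) :=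
        h1.trans (by nlinarith [abs_nonneg (u (N+1) * v N - u N * v (N+1))])
      rw [inv_le_iff_one_le_mul₀ haN]
      calc (1:ℝ) = 2 / |c| * (|c| / 2) := by field_simp
        _ ≤ 2 / |c| * (a N * (|u (N+1)| * |v N| + |u N| * |v (N+1)|)) := by
            apply mul_le_mul_of_nonneg_left h3 (by positivity)
        _ = 2 / |c| * (|u (N+1)| * |v N| + |u N| * |v (N+1)|) * a N := by ring
    have hsq_u := sq_summable hu
    have hsq_v := sq_summable hv
    have hsum : Summable fun N => 2 / |c| * (|u (N+1)| * |v N| + |u N| * |v (N+1)|) := by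
      refine Summable.mul_left _ (Summable.add ?_ ?_)
      · exact prod_summable ((summable_nat_add_iff (f := fun n => u n ^ 2) 1).mpr hsq_u) hsq_v
      · exact prod_summable hsq_u ((summable_nat_add_iff (f := fun n => v n ^ 2) 1).mpr hsq_v)
    have hsumInv : Summable fun N : ℕ => (a N)⁻¹ := by
      have h5 : Summable fun n : ℕ => (a (n + N₀))⁻¹ :=
        Summable.of_nonneg_of_le (fun n => inv_nonneg.mpr (ha _).le)
          (fun n => hbound _ (Nat.le_add_left _ _))
          (hsum.comp_injective (add_left_injective N₀))
      exact (summable_nat_add_iff N₀).mp h5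
    exact not_tendsto_atTop_of_tendsto_nhds hsumInv.hasSum.tendsto_sum_nat hdiv
  have := Summable.tsum_sub h1 h2
  rw [← hc, hc0] at this
  linarith [this]

end CarlemanAux

open CarlemanAux LinearPMap

/-- Carleman's criterion for Jacobi matrices: a Jacobi matrix `A` on `ℓ²(ℤ_{≥0})`
(real symmetric tridiagonal with off-diagonal entries `a n = A(n,n+1) > 0` and
diagonal entries `b n = A(n,n)`) with `Σ 1/a n = +∞`, viewed as a densely defined
operator `T` with domain the finitely supported sequences, is essentially
self-adjoint, i.e. its closure is self-adjoint. -/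
theorem jacobi_matrix_essentially_selfAdjoint
    (a b : ℕ → ℝ) (ha : ∀ n, 0 < a n)
    (hdiv : Tendsto (fun N : ℕ => ∑ n ∈ Finset.range N, (a n)⁻¹) atTop atTop)
    (T : lp (fun _ : ℕ => ℝ) 2 →ₗ.[ℝ] lp (fun _ : ℕ => ℝ) 2)
    (hdom : ∀ v : lp (fun _ : ℕ => ℝ) 2,
      v ∈ T.domain ↔ Set.Finite {n : ℕ | (v : ∀ _ : ℕ, ℝ) n ≠ 0})
    (hT : ∀ (v : T.domain) (n : ℕ),
      ((T v : lp (fun _ : ℕ => ℝ) 2) : ∀ _ : ℕ, ℝ) n =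
        a n * ((v : lp (fun _ : ℕ => ℝ) 2) : ∀ _ : ℕ, ℝ) (n + 1)
          + b n * ((v : lp (fun _ : ℕ => ℝ) 2) : ∀ _ : ℕ, ℝ) n
          + if n = 0 then 0
            else a (n - 1) * ((v : lp (fun _ : ℕ => ℝ) 2) : ∀ _ : ℕ, ℝ) (n - 1)) :
    IsSelfAdjoint T.closure := by
  classical
  set K := lp (fun _ : ℕ => ℝ) 2 with hK
  -- basic facts
  have key' := key a b ha hdiv
  -- inner ℝ product formula
  have hinner : ∀ f g : K, (inner ℝ f g : ℝ) = ∑' n, f n * g n := fun f g => by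
    rw [lp.inner_eq_tsum]; exact tsum_congr fun n => by rw [real_inner_comm]; rfl
  have hips : ∀ f g : K, Summable fun n => f n * g n := fun f g => by
    have := lp.summable_inner (𝕜 := ℝ) g f
    simpa [RCLike.inner_apply] using this
  -- T's coordinates are given by W
  have hTW : ∀ (x : T.domain) (k : ℕ), ((T x : K) : ℕ → ℝ) k = W a b (x : K) k :=
    fun x k => hT x k
  have hTWfun : ∀ x : T.domain, ((T x : K) : ℕ → ℝ) = W a b (x : K) :=
    fun x => funext (hTW x)
  -- basis vectors
  have hedom : ∀ n : ℕ, (lp.single 2 n (1:ℝ) : K) ∈ T.domain := fun n => by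
    rw [hdom]
    refine (Set.finite_singleton n).subset fun k hk => ?_
    simp only [Set.mem_setOf_eq] at hk
    by_contra hkn
    exact hk (lp.single_apply_ne 2 n 1 (by simpa using hkn))
  have he_apply : ∀ n k : ℕ, ((lp.single 2 n (1:ℝ) : K) : ℕ → ℝ) k = if k = n then 1 else 0 :=
    fun n k => by rw [lp.single_apply]; split_ifs with h <;> simp [h]
  -- summability against a finitely supported vector
  have hfin : ∀ (g : ℕ → ℝ) (x : T.domain), Summable fun k => g k * ((x : K) : ℕ → ℝ) k := by
    intro g x
    refine summable_of_ne_finset_zero (s := ((hdom x).mp x.2).toFinset) fun k hk => ?_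
    have : ((x : K) : ℕ → ℝ) k = 0 := by
      by_contra h
      exact hk (Set.Finite.mem_toFinset _ |>.mpr h)
    rw [this, mul_zero]
  have hfin' : ∀ (g : ℕ → ℝ) (n : ℕ), Summable fun k => ((lp.single 2 n (1:ℝ) : K) : ℕ → ℝ) k * g k := by
    intro g n
    refine summable_of_ne_finset_zero (s := {n}) fun k hk => ?_
    rw [he_apply, if_neg (by simpa using hk), zero_mul]
  -- symmetry of T on its domain
  have hsymT : ∀ x z : T.domain, (inner ℝ (T x : K) (z : K) : ℝ) = inner ℝ (x : K) (T z : K) := by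
    intro x z
    rw [hinner, hinner]
    have h1 : ∀ k, ((T x : K) : ℕ → ℝ) k * ((z : K) : ℕ → ℝ) k
        = W a b (x : K) k * ((z : K) : ℕ → ℝ) k := fun k => by rw [hTW]
    have h2 : ∀ k, ((x : K) : ℕ → ℝ) k * ((T z : K) : ℕ → ℝ) k
        = ((x : K) : ℕ → ℝ) k * W a b (z : K) k := fun k => by rw [hTW]
    rw [tsum_congr h1, tsum_congr h2]
    exact key' _ _ (lp.memℓp (x : K)) (lp.memℓp (z : K))
      (by rw [← funext (hTW x)]; exact hfin _ z)
      (by rw [show (fun k => ((x:K):ℕ→ℝ) k * W a b (z:K) k) = fun k => W a b (z:K) k * ((x:K):ℕ→ℝ) k from funext fun k => mul_comm _ _, ← funext (hTW z)]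
          exact hfin _ x)
  -- density of the domain
  have hdense : Dense (T.domain : Set K) := by
    intro f
    have hs : ∀ s : Finset ℕ, (∑ i ∈ s, lp.single 2 i (f i) : K) ∈ T.domain := by
      intro s
      rw [hdom]
      refine s.finite_toSet.subset fun k hk => ?_
      simp only [Set.mem_setOf_eq] at hk
      by_contra hks
      refine hk ?_
      rw [lp.coeFn_sum]
      simp only [Finset.sum_apply]
      refine Finset.sum_eq_zero fun i hi => ?_
      exact lp.single_apply_ne (E := fun _ : ℕ => ℝ) 2 i (f i) (j := k)
        (fun h => hks (by rw [h]; exact Finset.mem_coe.mpr hi))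
    exact mem_closure_of_tendsto (lp.hasSum_single (by norm_num) f)
      (Eventually.of_forall hs)
  -- the adjoint S := T†
  set S := T.adjoint with hS
  -- coordinates of the adjoint
  have hval : ∀ (u : S.domain) (n : ℕ), ((S u : K) : ℕ → ℝ) n = W a b (u : K) n := by
    intro u n
    have h1 : ((S u : K) : ℕ → ℝ) n = (inner ℝ (S u : K) (lp.single 2 n (1:ℝ) : K) : ℝ) := by
      rw [lp.inner_single_right]; simp [RCLike.inner_apply]
    have h2 := adjoint_isFormalAdjoint hdense u ⟨_, hedom n⟩
    rw [h1, h2, hinner]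
    have h3 : ∀ k, ((u : K) : ℕ → ℝ) k * ((T ⟨_, hedom n⟩ : K) : ℕ → ℝ) k
        = ((u : K) : ℕ → ℝ) k * W a b ((lp.single 2 n (1:ℝ) : K)) k := fun k => by rw [hTW]
    rw [tsum_congr h3]
    have h5 : (fun k => ((u:K):ℕ→ℝ) k * W a b ((lp.single 2 n (1:ℝ) : K)) k)
        = fun k => W a b ((lp.single 2 n (1:ℝ) : K)) k * ((u:K):ℕ→ℝ) k :=
      funext fun k => mul_comm _ _
    have h6 : (fun k => ((lp.single 2 n (1:ℝ) : K) : ℕ→ℝ) k * W a b ((u:K)) k)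
        = fun k => if k = n then W a b ((u:K)) n else 0 := by
      funext k
      rw [he_apply]
      split_ifs with h
      · rw [h, one_mul]
      · rw [zero_mul]
    rw [h5]
    rw [key' _ _ (lp.memℓp ((lp.single 2 n (1:ℝ) : K))) (lp.memℓp (u : K))
      (by rw [← hTWfun ⟨_, hedom n⟩]; exact hips _ _) (hfin' _ n)]
    rw [tsum_congr (fun k => congrFun h6 k)]
    exact tsum_ite_eq n _
  -- membership criterion for the adjoint domain
  have hmem : ∀ (q : K), Memℓp (W a b (q : ℕ → ℝ)) 2 → q ∈ S.domain := by
    intro q hWq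
    refine mem_adjoint_domain_of_exists _ ⟨(⟨W a b (q : ℕ → ℝ), hWq⟩ : K), fun x => ?_⟩
    rw [hinner, hinner]
    have h2 : ∀ k, (q : ℕ → ℝ) k * ((T x : K) : ℕ → ℝ) k
        = (q : ℕ → ℝ) k * W a b ((x : K)) k := fun k => by rw [hTW]
    rw [tsum_congr h2]
    exact key' _ _ (lp.memℓp q) (lp.memℓp (x : K)) (hfin _ x)
      (by rw [show (fun k => (q:ℕ→ℝ) k * W a b ((x:K)) k) = fun k => W a b ((x:K)) k * (q:ℕ→ℝ) k from funext fun k => mul_comm _ _, ← hTWfun x]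
          exact hips _ _)
  -- Memℓp of W for adjoint-domain elements
  have hWmem : ∀ u : S.domain, Memℓp (W a b ((u : K) : ℕ → ℝ)) 2 := by
    intro u
    have : ((S u : K) : ℕ → ℝ) = W a b ((u : K) : ℕ → ℝ) := funext (hval u)
    exact this ▸ lp.memℓp (S u : K)
  -- symmetry of the adjoint
  have hsymm : ∀ u v : S.domain, (inner ℝ (S u : K) (v : K) : ℝ) = inner ℝ (u : K) (S v : K) := by
    intro u v
    rw [hinner, hinner]
    rw [tsum_congr (fun k => by rw [hval u] :
      ∀ k, ((S u : K) : ℕ → ℝ) k * ((v : K) : ℕ → ℝ) k = W a b ((u:K)) k * ((v : K) : ℕ → ℝ) k)]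
    rw [tsum_congr (fun k => by rw [hval v] :
      ∀ k, ((u : K) : ℕ → ℝ) k * ((S v : K) : ℕ → ℝ) k = ((u:K):ℕ→ℝ) k * W a b ((v : K)) k)]
    exact key' _ _ (lp.memℓp (u : K)) (lp.memℓp (v : K))
      (by rw [← funext (hval u)]; exact hips _ _)
      (by rw [← funext (hval v)]; exact hips _ _)
  -- T ≤ S
  have hTleS : T ≤ S := by
    refine ⟨fun x hx => hmem x (hTWfun ⟨x, hx⟩ ▸ lp.memℓp (T ⟨x, hx⟩ : K)), ?_⟩
    intro x y hxy
    symm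
    refine adjoint_apply_eq hdense y fun z => ?_
    have hxz : (inner ℝ (T x : K) (z : K) : ℝ) = inner ℝ (x : K) (T z : K) := hsymT x z
    rw [hxz, hxy]
  have hdenseS : Dense (S.domain : Set K) := hdense.mono hTleS.1
  -- graph identification: closure of graph T = graph S
  have hgraph : T.graph.topologicalClosure = S.graph := by
    apply le_antisymm
    · -- closure of graph T ⊆ graph S
      intro ⟨x, y⟩ hxy
      have hxy' : (x, y) ∈ _root_.closure (T.graph : Set (K × K)) := by
        rwa [← Submodule.topologicalClosure_coe]
      -- for each n, ⟪y, e n⟫ = ⟪x, T (e n)⟫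
      have hn : ∀ n : ℕ, (inner ℝ y (lp.single 2 n (1:ℝ) : K) : ℝ)
          = inner ℝ x (T ⟨_, hedom n⟩ : K) := by
        intro n
        have hcl : IsClosed {p : K × K |
            (inner ℝ p.2 (lp.single 2 n (1:ℝ) : K) : ℝ) = inner ℝ p.1 (T ⟨_, hedom n⟩ : K)} :=
          isClosed_eq (Continuous.inner continuous_snd continuous_const)
            (Continuous.inner continuous_fst continuous_const)
        have hsub : (T.graph : Set (K × K)) ⊆ {p : K × K |
            (inner ℝ p.2 (lp.single 2 n (1:ℝ) : K) : ℝ) = inner ℝ p.1 (T ⟨_, hedom n⟩ : K)} := by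
          intro p hp
          obtain ⟨z, hz1, hz2⟩ := (mem_graph_iff T).mp hp
          simp only [Set.mem_setOf_eq]
          rw [← hz1, ← hz2]
          exact hsymT z ⟨_, hedom n⟩
        exact closure_minimal hsub hcl hxy'
      -- coordinates of y equal W x
      have hyW : (y : ℕ → ℝ) = W a b (x : ℕ → ℝ) := by
        funext n
        have h1 : (y : ℕ → ℝ) n = (inner ℝ y (lp.single 2 n (1:ℝ) : K) : ℝ) := by
          rw [lp.inner_single_right]; simp [RCLike.inner_apply]
        rw [h1, hn n, hinner]
        have h3 : ∀ k, (x : ℕ → ℝ) k * ((T ⟨_, hedom n⟩ : K) : ℕ → ℝ) k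
            = (x : ℕ → ℝ) k * W a b ((lp.single 2 n (1:ℝ) : K)) k := fun k => by rw [hTW]
        rw [tsum_congr h3]
        have h5 : (fun k => (x:ℕ→ℝ) k * W a b ((lp.single 2 n (1:ℝ) : K)) k)
            = fun k => W a b ((lp.single 2 n (1:ℝ) : K)) k * (x:ℕ→ℝ) k :=
          funext fun k => mul_comm _ _
        rw [h5]
        rw [(key' _ _ (lp.memℓp ((lp.single 2 n (1:ℝ) : K))) (lp.memℓp x)
          (by rw [← hTWfun ⟨_, hedom n⟩]; exact hips _ _) (hfin' _ n))]
        have h6 : (fun k => ((lp.single 2 n (1:ℝ) : K) : ℕ→ℝ) k * W a b ((x:ℕ→ℝ)) k)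
            = fun k => if k = n then W a b ((x:ℕ→ℝ)) n else 0 := by
          funext k
          rw [he_apply]
          split_ifs with h
          · rw [h, one_mul]
          · rw [zero_mul]
        rw [tsum_congr (fun k => congrFun h6 k)]
        exact tsum_ite_eq n _
      have hWx : Memℓp (W a b (x : ℕ → ℝ)) 2 := hyW ▸ lp.memℓp y
      have hxS : x ∈ S.domain := hmem x hWx
      refine (mem_graph_iff S).mpr ⟨⟨x, hxS⟩, rfl, ?_⟩
      apply lp.ext
      funext n
      rw [hval ⟨x, hxS⟩ n]
      exact (congrFun hyW n).symm
    · -- graph S ⊆ closure of graph T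
      intro ⟨x, y⟩ hxy
      obtain ⟨u, hu1, hu2⟩ := (mem_graph_iff S).mp hxy
      subst hu1; subst hu2
      -- work in the ℓ²-product space
      set G2 := WithLp 2 (K × K) with hG2
      set eqv := WithLp.prodContinuousLinearEquiv 2 ℝ K K with heqv
      set Γ : Submodule ℝ G2 := T.graph.comap (eqv.toLinearEquiv.toLinearMap : G2 →ₗ[ℝ] K × K) with hΓ
      have hmemΓ : ∀ z : G2, z ∈ Γ ↔ eqv z ∈ T.graph := fun z => Iff.rfl
      have horth : (eqv.symm ((u : K), (S u : K)) : G2) ∈ Γᗮᗮ := by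
        rw [Submodule.mem_orthogonal]
        intro w hw
        rw [Submodule.mem_orthogonal] at hw
        -- w is orthogonal to the graph of T
        have hwg : ∀ x : T.domain, (inner ℝ ((x : K)) ((eqv w).1) : ℝ)
            + inner ℝ ((T x : K)) ((eqv w).2) = 0 := by
          intro x
          have hmem' : (eqv.symm ((x : K), (T x : K)) : G2) ∈ Γ := by
            rw [hmemΓ]
            simp only [ContinuousLinearEquiv.apply_symm_apply]
            exact T.mem_graph x
          have := hw _ hmem'
          rw [WithLp.prod_inner_apply] at this
          exact this
        -- hence (eqv w).2 lies in the adjoint domain with value -(eqv w).1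
        set p := (eqv w).1 with hp
        set q := (eqv w).2 with hq
        have hqW : W a b (q : ℕ → ℝ) = fun n => -(p : ℕ → ℝ) n := by
          funext n
          have h0 := hwg ⟨_, hedom n⟩
          have h1 : (inner ℝ ((lp.single 2 n (1:ℝ) : K)) p : ℝ) = (p : ℕ → ℝ) n := by
            rw [lp.inner_single_left]; simp [RCLike.inner_apply]
          have h2 : (inner ℝ ((T ⟨_, hedom n⟩ : K)) q : ℝ) = W a b (q : ℕ → ℝ) n := by
            rw [hinner]
            have h3 : ∀ k, ((T ⟨_, hedom n⟩ : K) : ℕ → ℝ) k * (q : ℕ → ℝ) k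
                = W a b ((lp.single 2 n (1:ℝ) : K)) k * (q : ℕ → ℝ) k := fun k => by rw [hTW]
            rw [tsum_congr h3]
            rw [key' _ _ (lp.memℓp ((lp.single 2 n (1:ℝ) : K))) (lp.memℓp q)
              (by rw [← hTWfun ⟨_, hedom n⟩]; exact hips _ _) (hfin' _ n)]
            have h6 : (fun k => ((lp.single 2 n (1:ℝ) : K) : ℕ→ℝ) k * W a b ((q:ℕ→ℝ)) k)
                = fun k => if k = n then W a b ((q:ℕ→ℝ)) n else 0 := by
              funext k
              rw [he_apply]
              split_ifs with h
              · rw [h, one_mul]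
              · rw [zero_mul]
            rw [tsum_congr (fun k => congrFun h6 k)]
            exact tsum_ite_eq n _
          rw [h1, h2] at h0
          linarith
        have hqWm : Memℓp (W a b (q : ℕ → ℝ)) 2 := by
          rw [hqW]
          have := lp.memℓp (-p)
          rwa [lp.coeFn_neg] at this
        have hqS : q ∈ S.domain := hmem q hqWm
        have hSq : (S ⟨q, hqS⟩ : K) = -p := by
          apply lp.ext
          funext n
          rw [hval ⟨q, hqS⟩ n, congrFun hqW n, lp.coeFn_neg]
          rfl
        -- conclude orthogonality
        rw [WithLp.prod_inner_apply]
        have hcomp1 : ((eqv.symm ((u : K), (S u : K)) : G2)).ofLp.1 = (u : K) := rfl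
        have hcomp2 : ((eqv.symm ((u : K), (S u : K)) : G2)).ofLp.2 = (S u : K) := rfl
        have hwp : (w : G2).ofLp.1 = p := rfl
        have hwq : (w : G2).ofLp.2 = q := rfl
        rw [hcomp1, hcomp2, hwp, hwq]
        have hfinal : (inner ℝ p (u : K) : ℝ) + inner ℝ q (S u : K) = 0 := by
          have h7 : (inner ℝ p (u : K) : ℝ) = -(inner ℝ ((S ⟨q, hqS⟩ : K)) (u : K) : ℝ) := by
            rw [hSq]; rw [inner_neg_left]; ring
          rw [h7, hsymm ⟨q, hqS⟩ u]
          ring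
        exact hfinal
      -- transfer membership back through the equivalence
      have hG2clos : (eqv.symm ((u : K), (S u : K)) : G2) ∈ Γ.topologicalClosure := by
        rw [← Submodule.orthogonal_orthogonal_eq_closure]
        exact horth
      have hset : ((u : K), (S u : K)) ∈ _root_.closure (T.graph : Set (K × K)) := by
        have h9 : (eqv.symm ((u : K), (S u : K)) : G2) ∈ _root_.closure (Γ : Set G2) := by
          rw [← Submodule.topologicalClosure_coe]
          exact hG2clos
        have h10 : _root_.closure (Γ : Set G2)
            = eqv.toHomeomorph ⁻¹' _root_.closure (T.graph : Set (K × K)) := by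
          have h11 : (Γ : Set G2) = eqv.toHomeomorph ⁻¹' (T.graph : Set (K × K)) :=
            Set.ext fun z => Iff.rfl
          rw [h11, ← eqv.toHomeomorph.preimage_closure]
        rw [h10, Set.mem_preimage] at h9
        have h12 : eqv.toHomeomorph ((eqv.symm ((u : K), (S u : K)) : G2))
            = ((u : K), (S u : K)) := eqv.apply_symm_apply _
        rwa [h12] at h9
      rwa [← Submodule.topologicalClosure_coe] at hset
  -- conclusion
  have hclosable : T.IsClosable := ⟨S, hgraph⟩
  have hTclos : T.closure = S := eq_of_eq_graph
    (by rw [← hclosable.graph_closure_eq_closure_graph, hgraph])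
  rw [isSelfAdjoint_def, hTclos]
  apply le_antisymm
  · -- S† ≤ S
    have h2 : T.IsFormalAdjoint S.adjoint := by
      intro x y
      have hz : ((x : K)) ∈ S.domain := hTleS.1 x.2
      have hzval : (S ⟨(x : K), hz⟩ : K) = (T x : K) := (hTleS.2 (x := x) (y := ⟨(x : K), hz⟩) rfl).symm
      have h3 := adjoint_isFormalAdjoint hdenseS y ⟨(x : K), hz⟩
      rw [hzval] at h3
      calc (inner ℝ (T x : K) (y : K) : ℝ) = inner ℝ (y : K) (T x : K) := real_inner_comm _ _
        _ = inner ℝ ((S.adjoint y : K)) ((x : K)) := h3.symm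
        _ = inner ℝ ((x : K)) ((S.adjoint y : K)) := real_inner_comm _ _
    exact h2.le_adjoint hdense
  · -- S ≤ S†
    exact IsFormalAdjoint.le_adjoint hdenseS (hsymm : S.IsFormalAdjoint S)
end

section
/- Pushforward of the diagonal Schur measure is the Meixner ensemble: fix a, b ∈ ℤ_{≥1}, x, y ∈ ℝ_{>0} with xy < 1, and set n = min(a,b). The Schur measure SM(x,…,x; y,…,y) (a copies of x and b copies of y), which assigns to λ the weight s_λ(x,…,x) s_λ(y,…,y) ∏_{i=1}^a ∏_{j=1}^b (1 − xy), is supported on partitions with at most n parts, and its pushforward under λ ↦ {n + λ_i − i : 1 ≤ i ≤ n} ⊂ ℤ_{≥0} equals the n-point Meixner orthogonal polynomial ensemble Meixner(n, |a−b|+1, xy), i.e., the measure on n-point configurations {ℓ₁ > … > ℓ_n} ⊂ ℤ_{≥0} proportional to ∏_{i<j}(ℓ_i − ℓ_j)² ∏_i [ Γ(|a−b|+1+ℓ_i) (xy)^{ℓ_i} / (Γ(|a−b|+1) ℓ_i!) ]. -/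
/-- Value of the Schur polynomial `s_λ` at `m` equal positive variables `(x,…,x)`
(Weyl's dimension formula): `x^{|λ|} ∏_{1≤i<j≤m} (λ_i − i − λ_j + j)/(j − i)`,
where `λ` is given as a weakly decreasing sequence `lam : ℕ → ℕ` with at most `m`
nonzero parts (indices here are 0-based). -/
noncomputable def schurVal (m : ℕ) (x : ℝ) (lam : ℕ → ℕ) : ℝ :=
  x ^ (∑ i ∈ Finset.range m, lam i) *
    ∏ i ∈ Finset.range m, ∏ j ∈ Finset.range m,
      if i < j then ((lam i : ℝ) - i - (lam j : ℝ) + j) / ((j : ℝ) - i) else 1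

open Finset

lemma fact_prod_aux (l K : ℕ) :
    (((l + K).factorial : ℝ)) = (l.factorial : ℝ) * ∏ k ∈ range K, ((l : ℝ) + 1 + k) := by
  induction K with
  | zero => simp
  | succ K ih =>
    rw [prod_range_succ, ← mul_assoc, ← ih]
    have h : l + (K + 1) = (l + K) + 1 := by ring
    rw [h, Nat.factorial_succ]
    push_cast; ring

lemma key (n b : ℕ) (hn : 1 ≤ n) (hnb : n ≤ b) (x y : ℝ)
    (hx : 0 < x) (hy : 0 < y) (hxy : x * y < 1) :
    ∃ c : ℝ, 0 < c ∧
      ∀ lam : ℕ → ℕ, (∀ i j : ℕ, i ≤ j → lam j ≤ lam i) →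
        (∀ i : ℕ, n ≤ i → lam i = 0) →
        schurVal n x lam * schurVal b y lam * (1 - x * y) ^ (n * b) =
          c * (∏ i ∈ range n, ∏ j ∈ range n,
                if i < j then (((n - 1 - i + lam i : ℕ) : ℝ)
                  - ((n - 1 - j + lam j : ℕ) : ℝ)) ^ 2 else 1) *
            ∏ i ∈ range n,
              Real.Gamma (((b - n : ℕ) : ℝ) + 1 + ((n - 1 - i + lam i : ℕ) : ℝ))
                  * (x * y) ^ (n - 1 - i + lam i) /
                (Real.Gamma (((b - n : ℕ) : ℝ) + 1)
                  * (Nat.factorial (n - 1 - i + lam i))) := by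
  set K := b - n with hK
  have hb : b = n + K := by omega
  have hxy0 : 0 < x * y := mul_pos hx hy
  -- constants
  set W : ℝ := ∏ i ∈ range n, ∏ j ∈ range n, if i < j then ((j : ℝ) - i) else 1 with hW
  set D : ℝ := ∏ i ∈ range n, ∏ k ∈ range K, ((n : ℝ) + k - i) with hD
  set T : ℕ := ∑ i ∈ range n, (n - 1 - i) with hT
  have hWpos : 0 < W := by
    apply prod_pos; intro i hi; apply prod_pos; intro j hj
    split_ifs with h
    · have : (i : ℝ) < j := by exact_mod_cast h
      linarith
    · norm_num
  have hDpos : 0 < D := by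
    apply prod_pos; intro i hi; apply prod_pos; intro k hk
    have hi' : i < n := mem_range.mp hi
    have : (i : ℝ) < n := by exact_mod_cast hi'
    have : (0:ℝ) ≤ (k:ℝ) := by positivity
    linarith
  have hΓpos : 0 < Real.Gamma ((K : ℝ) + 1) := by
    apply Real.Gamma_pos_of_pos; positivity
  refine ⟨Real.Gamma ((K : ℝ) + 1) ^ n * (1 - x * y) ^ (n * b) / (W ^ 2 * D * (x * y) ^ T),
    div_pos (mul_pos (pow_pos hΓpos n) (pow_pos (by linarith) _))
      (mul_pos (mul_pos (pow_pos hWpos 2) hDpos) (pow_pos hxy0 T)), ?_⟩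
  intro lam hdec hzero
  set ℓ : ℕ → ℕ := fun i => n - 1 - i + lam i with hℓ
  have hcast : ∀ i ∈ range n, ((ℓ i : ℕ) : ℝ) = (n : ℝ) - 1 - i + lam i := by
    intro i hi
    have hi' : i < n := mem_range.mp hi
    have h1 : n - 1 - i = n - (1 + i) := by omega
    simp only [hℓ, h1]
    push_cast [Nat.cast_sub (by omega : 1 + i ≤ n)]
    ring
  set S : ℕ := ∑ i ∈ range n, lam i with hS
  set V : ℝ := ∏ i ∈ range n, ∏ j ∈ range n, if i < j then ((ℓ i : ℝ) - ℓ j) else 1 with hV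
  set F : ℝ := ∏ i ∈ range n, (((ℓ i + K).factorial : ℕ) : ℝ) with hF
  set G : ℝ := ∏ i ∈ range n, (((ℓ i).factorial : ℕ) : ℝ) with hG
  -- Step 1 : schurVal n x lam
  have step1 : schurVal n x lam = x ^ S * (V / W) := by
    rw [schurVal, ← hS]
    congr 1
    rw [hV, hW, ← prod_div_distrib]
    refine prod_congr rfl fun i hi => ?_
    rw [← prod_div_distrib]
    refine prod_congr rfl fun j hj => ?_
    split_ifs with h
    · rw [hcast i hi, hcast j hj]; ring
    · simp
  -- Step 2 : schurVal b y lam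
  have step2 : schurVal b y lam = y ^ S * (V / W) * (F / (G * D)) := by
    rw [schurVal]
    have hsum : ∑ i ∈ range b, lam i = S := by
      rw [hb, Finset.sum_range_add,
        Finset.sum_eq_zero fun i _ => hzero _ (Nat.le_add_right n i), add_zero, hS]
    have hprod : (∏ i ∈ range b, ∏ j ∈ range b,
        if i < j then ((lam i : ℝ) - i - (lam j : ℝ) + j) / ((j : ℝ) - i) else 1)
        = (V / W) * (F / (G * D)) := by
      rw [hb, prod_range_add]
      have h2 : (∏ i ∈ range K, ∏ j ∈ range (n + K),
          if n + i < j then ((lam (n + i) : ℝ) - ((n + i : ℕ) : ℝ) - (lam j : ℝ) + j)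
            / ((j : ℝ) - ((n + i : ℕ) : ℝ)) else 1) = 1 := by
        apply prod_eq_one; intro i _
        apply prod_eq_one; intro j _
        split_ifs with h
        · rw [hzero _ (Nat.le_add_right n i), hzero j (by omega)]
          have hji : ((n + i : ℕ) : ℝ) < (j : ℝ) := by exact_mod_cast h
          have hne : ((j : ℝ) - ((n + i : ℕ) : ℝ)) ≠ 0 := by push_cast at hji ⊢; linarith
          rw [div_eq_one_iff_eq hne]
          push_cast; ring
        · rfl
      rw [h2, mul_one]
      have h3 : ∀ i ∈ range n, (∏ j ∈ range (n + K),
          if i < j then ((lam i : ℝ) - i - (lam j : ℝ) + j) / ((j : ℝ) - i) else 1)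
          = (∏ j ∈ range n, if i < j then ((ℓ i : ℝ) - ℓ j) / ((j : ℝ) - i) else 1)
            * ((((ℓ i + K).factorial : ℕ) : ℝ) / (((ℓ i).factorial : ℕ) : ℝ)
              / (∏ k ∈ range K, ((n : ℝ) + k - i))) := by
        intro i hi
        rw [prod_range_add]
        congr 1
        · refine prod_congr rfl fun j hj => ?_
          split_ifs with h
          · rw [hcast i hi, hcast j hj]; ring
          · rfl
        · have hik : ∀ k ∈ range K,
              (if i < n + k then ((lam i : ℝ) - i - (lam (n + k) : ℝ) + (n + k : ℕ))
                / (((n + k : ℕ) : ℝ) - i) else 1)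
              = ((ℓ i : ℝ) + 1 + k) / ((n : ℝ) + k - i) := by
            intro k _
            have h1 : i < n + k := by have := mem_range.mp hi; omega
            rw [if_pos h1, hzero (n + k) (Nat.le_add_right n k), hcast i hi]
            push_cast
            congr 1 <;> ring
          rw [prod_congr rfl hik, prod_div_distrib]
          congr 1
          rw [fact_prod_aux (ℓ i) K,
            mul_div_cancel_left₀ _ (by exact_mod_cast (ℓ i).factorial_ne_zero)]
      rw [prod_congr rfl h3, prod_mul_distrib]
      congr 1
      · rw [hV, hW, ← prod_div_distrib]
        refine prod_congr rfl fun i _ => ?_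
        rw [← prod_div_distrib]
        refine prod_congr rfl fun j _ => ?_
        split_ifs with h
        · rfl
        · simp
      · rw [prod_div_distrib, prod_div_distrib, hF, hG, hD, div_div]
    rw [hsum, hprod, mul_assoc]
  -- Step 3 : RHS Vandermonde square
  have step3 : (∏ i ∈ range n, ∏ j ∈ range n,
      if i < j then (((n - 1 - i + lam i : ℕ) : ℝ)
        - ((n - 1 - j + lam j : ℕ) : ℝ)) ^ 2 else 1) = V ^ 2 := by
    rw [hV, ← prod_pow]
    refine prod_congr rfl fun i _ => ?_
    rw [← prod_pow]
    refine prod_congr rfl fun j _ => ?_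
    split_ifs with h <;> simp [hℓ]
  -- Step 4 : RHS Meixner weight
  have step4 : (∏ i ∈ range n,
      Real.Gamma (((b - n : ℕ) : ℝ) + 1 + ((n - 1 - i + lam i : ℕ) : ℝ))
          * (x * y) ^ (n - 1 - i + lam i) /
        (Real.Gamma (((b - n : ℕ) : ℝ) + 1) * (Nat.factorial (n - 1 - i + lam i)))) =
      F * ((x * y) ^ T * (x * y) ^ S) / (Real.Gamma ((K : ℝ) + 1) ^ n * G) := by
    have hΓ : ∀ i ∈ range n,
        Real.Gamma (((b - n : ℕ) : ℝ) + 1 + ((n - 1 - i + lam i : ℕ) : ℝ))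
          * (x * y) ^ (n - 1 - i + lam i)
          / (Real.Gamma (((b - n : ℕ) : ℝ) + 1) * (Nat.factorial (n - 1 - i + lam i)))
        = (((ℓ i + K).factorial : ℕ) : ℝ) * (x * y) ^ (ℓ i)
          / (Real.Gamma ((K : ℝ) + 1) * (((ℓ i).factorial : ℕ) : ℝ)) := by
      intro i _
      have e1 : ((b - n : ℕ) : ℝ) + 1 + ((n - 1 - i + lam i : ℕ) : ℝ)
          = ((ℓ i + K : ℕ) : ℝ) + 1 := by
        rw [← hK]; push_cast [hℓ]; ring
      have e2 : ((b - n : ℕ) : ℝ) + 1 = (K : ℝ) + 1 := by rw [← hK]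
      rw [e1, e2, Real.Gamma_nat_eq_factorial]
    rw [prod_congr rfl hΓ, prod_div_distrib, prod_mul_distrib, prod_mul_distrib,
      prod_const, prod_pow_eq_pow_sum, hF, hG, card_range]
    have hsum : ∑ i ∈ range n, ℓ i = T + S := by
      rw [hT, hS, ← Finset.sum_add_distrib]
    rw [hsum, pow_add]
  rw [step1, step2, step3, step4]
  have hGpos : 0 < G := by
    apply prod_pos; intro i _; exact_mod_cast Nat.factorial_pos _
  have hxyT : (0:ℝ) < (x * y) ^ T := by positivity
  have hxS : x ^ S * y ^ S = (x * y) ^ S := (mul_pow x y S).symm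
  field_simp
  ring
/-- Pushforward of the diagonal Schur measure is the Meixner ensemble: for
`a, b ≥ 1`, `x, y > 0`, `xy < 1`, `n = min(a,b)`, the Schur measure weight
`s_λ(x,…,x) s_λ(y,…,y) (1−xy)^{ab}` of a partition `λ` with at most `n` parts equals,
up to a constant `c > 0` independent of `λ`, the Meixner ensemble weight
`∏_{i<j}(ℓ_i−ℓ_j)² ∏_i Γ(β+ℓ_i)(xy)^{ℓ_i}/(Γ(β) ℓ_i!)` of the configuration
`ℓ_i = n + λ_i − i` (0-based: `ℓ i = n − 1 − i + λ i`), where `β = |a−b|+1`. -/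
theorem schur_measure_is_meixner_ensemble (a b : ℕ) (ha : 1 ≤ a) (hb : 1 ≤ b)
    (x y : ℝ) (hx : 0 < x) (hy : 0 < y) (hxy : x * y < 1) :
    ∃ c : ℝ, 0 < c ∧
      ∀ lam : ℕ → ℕ, (∀ i j : ℕ, i ≤ j → lam j ≤ lam i) →
        (∀ i : ℕ, min a b ≤ i → lam i = 0) →
        let n := min a b
        let β : ℝ := (((a : ℤ) - b).natAbs : ℝ) + 1
        let ℓ : ℕ → ℕ := fun i => n - 1 - i + lam i
        schurVal a x lam * schurVal b y lam * (1 - x * y) ^ (a * b) =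
          c * (∏ i ∈ Finset.range n, ∏ j ∈ Finset.range n,
                if i < j then ((ℓ i : ℝ) - (ℓ j : ℝ)) ^ 2 else 1) *
            ∏ i ∈ Finset.range n,
              Real.Gamma (β + (ℓ i : ℝ)) * (x * y) ^ (ℓ i) /
                (Real.Gamma β * (Nat.factorial (ℓ i))) := by
  rcases le_total a b with hab | hba
  · have hmin : min a b = a := min_eq_left hab
    have hnat : ((a : ℤ) - b).natAbs = b - a := by omega
    obtain ⟨c, hc, hmain⟩ := key a b ha hab x y hx hy hxy
    refine ⟨c, hc, ?_⟩
    intro lam h1 h2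
    dsimp only
    simp only [hmin, hnat]
    exact hmain lam h1 (by rwa [hmin] at h2)
  · have hmin : min a b = b := min_eq_right hba
    have hnat : ((a : ℤ) - b).natAbs = a - b := by omega
    obtain ⟨c, hc, hmain⟩ := key b a hb hba y x hy hx (by rwa [mul_comm])
    refine ⟨c, hc, ?_⟩
    intro lam h1 h2
    dsimp only
    simp only [hmin, hnat]
    have h := hmain lam h1 (by rwa [hmin] at h2)
    rw [mul_comm x y, mul_comm (schurVal a x lam) (schurVal b y lam), mul_comm a b]
    exact h
end

section
/- Pushforward of the dual diagonal Schur measure is the Krawtchouk ensemble: fix a, b ∈ ℤ_{≥1}, x, y > 0. The measure on partitions λ with λ_1 ≤ b and at most a parts, with weight proportional to s_λ(x,…,x) s_{λ'}(y,…,y) (a copies of x, b copies of y, λ' the conjugate partition), pushed forward under λ ↦ {a + λ_i − i : 1 ≤ i ≤ a} ⊂ {0,…,a+b−1}, equals the a-point Krawtchouk ensemble Krawtchouk(a, xy/(1+xy), a+b−1): the measure on a-point subsets {ℓ₁ > … > ℓ_a} of {0,…,a+b−1} proportional to ∏_{i<j}(ℓ_i−ℓ_j)² ∏_i C(a+b−1,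 ℓ_i) p^{ℓ_i}(1−p)^{a+b−1−ℓ_i} with p = xy/(1+xy). -/
open Finset

/-- Auxiliary distance kernel. -/
noncomputable def auxHd (u v : ℕ) : ℝ := if u = v then 1 else |(u : ℝ) - (v : ℝ)|

lemma auxHd_symm (u v : ℕ) : auxHd u v = auxHd v u := by
  unfold auxHd
  rcases eq_or_ne u v with h | h
  · simp [h]
  · rw [if_neg h, if_neg (Ne.symm h), abs_sub_comm]

lemma auxHd_pos (u v : ℕ) : 0 < auxHd u v := by
  unfold auxHd
  rcases eq_or_ne u v with h | h
  · simp [h]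
  · rw [if_neg h, abs_pos, sub_ne_zero]
    exact_mod_cast h

lemma auxHd_compl (N u v : ℕ) (hu : u ≤ N) (hv : v ≤ N) : auxHd (N - u) (N - v) = auxHd u v := by
  unfold auxHd
  have h1 : N - u = N - v ↔ u = v := by omega
  rcases eq_or_ne u v with h | h
  · simp [h]
  · rw [if_neg (by rw [h1]; exact h), if_neg h, Nat.cast_sub hu, Nat.cast_sub hv,
      show (N : ℝ) - u - ((N:ℝ) - v) = -((u:ℝ) - v) by ring, abs_neg]

/-- Reindexing a double product over an injective enumeration. -/
lemma aux_reindex (f : ℕ → ℕ) (n : ℕ) (hf : Set.InjOn f (range n)) (H : ℕ → ℕ → ℝ) :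
    ∏ u ∈ (range n).image f, ∏ v ∈ (range n).image f, H u v
      = ∏ i ∈ range n, ∏ j ∈ range n, H (f i) (f j) := by
  rw [Finset.prod_image (fun x hx y hy h => hf hx hy h)]
  exact Finset.prod_congr rfl fun i _ => Finset.prod_image (fun x hx y hy h => hf hx hy h)

lemma aux_reindex_single (f : ℕ → ℕ) (n : ℕ) (hf : Set.InjOn f (range n)) (H : ℕ → ℝ) :
    ∏ u ∈ (range n).image f, H u = ∏ i ∈ range n, H (f i) :=
  Finset.prod_image (fun x hx y hy h => hf hx hy h)

/-- For a strictly decreasing enumeration, the `auxHd`-double product is a squared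
Vandermonde. -/
lemma aux_Q_sq (f : ℕ → ℕ) (n : ℕ) (hf : ∀ i j : ℕ, i < j → j < n → f j < f i) :
    ∏ i ∈ range n, ∏ j ∈ range n, auxHd (f i) (f j)
      = (∏ i ∈ range n, ∏ j ∈ range n, if i < j then (f i : ℝ) - f j else 1) ^ 2 := by
  have key : ∀ i ∈ range n, ∀ j ∈ range n,
      auxHd (f i) (f j) = (if i < j then (f i : ℝ) - f j else 1) *
        (if j < i then (f j : ℝ) - f i else 1) := by
    intro i hi j hj
    simp only [mem_range] at hi hj
    unfold auxHd
    rcases lt_trichotomy i j with h | h | h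
    · have hlt := hf i j h hj
      rw [if_pos h, if_neg (Nat.lt_asymm h), if_neg (by omega : f i ≠ f j), mul_one,
        abs_of_pos (sub_pos.mpr (by exact_mod_cast hlt))]
    · simp [h]
    · have hlt := hf j i h hi
      rw [if_neg (Nat.lt_asymm h), if_pos h, if_neg (by omega : f i ≠ f j), one_mul,
        abs_of_neg (sub_neg.mpr (by exact_mod_cast hlt))]
      ring
  calc ∏ i ∈ range n, ∏ j ∈ range n, auxHd (f i) (f j)
      = ∏ i ∈ range n, ∏ j ∈ range n, ((if i < j then (f i : ℝ) - f j else 1) *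
        (if j < i then (f j : ℝ) - f i else 1)) :=
        Finset.prod_congr rfl fun i hi => Finset.prod_congr rfl fun j hj => key i hi j hj
    _ = (∏ i ∈ range n, ∏ j ∈ range n, if i < j then (f i : ℝ) - f j else 1) *
        (∏ i ∈ range n, ∏ j ∈ range n, if j < i then (f j : ℝ) - f i else 1) := by
        rw [← Finset.prod_mul_distrib]
        exact Finset.prod_congr rfl fun i _ => Finset.prod_mul_distrib
    _ = (∏ i ∈ range n, ∏ j ∈ range n, if i < j then (f i : ℝ) - f j else 1) ^ 2 := by
        rw [sq]
        congr 1
        rw [Finset.prod_comm]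

/-- `∏_{k ≤ N} auxHd s k = s! (N-s)!` for `s ≤ N`. -/
lemma aux_fact (N s : ℕ) (hs : s ≤ N) :
    ∏ k ∈ range (N + 1), auxHd s k = (s.factorial : ℝ) * ((N - s).factorial : ℝ) := by
  rw [← Finset.prod_range_mul_prod_Ico _ (by omega : s + 1 ≤ N + 1)]
  have h1 : ∏ k ∈ range (s + 1), auxHd s k = (s.factorial : ℝ) := by
    rw [Finset.prod_range_succ]
    rw [show auxHd s s = 1 by unfold auxHd; simp, mul_one]
    have e1 : ∀ k ∈ range s, auxHd s k = (s : ℝ) - k := by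
      intro k hk
      simp only [mem_range] at hk
      unfold auxHd
      rw [if_neg (by omega), abs_of_pos (sub_pos.mpr (by exact_mod_cast hk))]
    rw [Finset.prod_congr rfl e1, ← Finset.prod_range_reflect]
    have e2 : ∀ k ∈ range s, (s : ℝ) - (s - 1 - k : ℕ) = (k : ℝ) + 1 := by
      intro k hk
      simp only [mem_range] at hk
      rw [Nat.cast_sub (by omega), Nat.cast_sub (by omega)]
      push_cast
      ring
    rw [Finset.prod_congr rfl e2]
    exact_mod_cast congrArg (Nat.cast : ℕ → ℝ) (Finset.prod_range_add_one_eq_factorial s)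
  have h2 : ∏ k ∈ Ico (s + 1) (N + 1), auxHd s k = ((N - s).factorial : ℝ) := by
    rw [Finset.prod_Ico_eq_prod_range]
    rw [show N + 1 - (s + 1) = N - s by omega]
    have e1 : ∀ k ∈ range (N - s), auxHd s (s + 1 + k) = (k : ℝ) + 1 := by
      intro k _
      unfold auxHd
      rw [if_neg (by omega)]
      rw [abs_of_neg (by push_cast; linarith)]
      push_cast; ring
    rw [Finset.prod_congr rfl e1]
    exact_mod_cast congrArg (Nat.cast : ℕ → ℝ)
      (Finset.prod_range_add_one_eq_factorial (N - s))
  rw [h1, h2]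


/-- The conjugate partition: `λ'_j = #{i : λ_i > j}` (0-based). -/
def conjPart (a : ℕ) (lam : ℕ → ℕ) : ℕ → ℕ :=
  fun j => ((Finset.range a).filter fun i => j < lam i).card

/-- Pushforward of the dual diagonal Schur measure is the Krawtchouk ensemble: for
`a, b ≥ 1` and `x, y > 0`, the weight `s_λ(x,…,x) s_{λ'}(y,…,y)` of a partition `λ`
with at most `a` parts, all of size `≤ b`, equals — up to a constant `c > 0`
independent of `λ` — the Krawtchouk ensemble weight
`∏_{i<j}(ℓ_i−ℓ_j)² ∏_i C(a+b−1, ℓ_i) p^{ℓ_i}(1−p)^{a+b−1−ℓ_i}` with `p = xy/(1+xy)`,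
of the configuration `ℓ_i = a + λ_i − i` (0-based: `ℓ i = a − 1 − i + λ i`). -/
theorem dual_schur_measure_is_krawtchouk_ensemble (a b : ℕ) (ha : 1 ≤ a) (hb : 1 ≤ b)
    (x y : ℝ) (hx : 0 < x) (hy : 0 < y) :
    ∃ c : ℝ, 0 < c ∧
      ∀ lam : ℕ → ℕ, (∀ i j : ℕ, i ≤ j → lam j ≤ lam i) →
        (∀ i : ℕ, a ≤ i → lam i = 0) → (∀ i : ℕ, lam i ≤ b) →
        let p : ℝ := x * y / (1 + x * y)
        let ℓ : ℕ → ℕ := fun i => a - 1 - i + lam i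
        schurVal a x lam * schurVal b y (conjPart a lam) =
          c * (∏ i ∈ Finset.range a, ∏ j ∈ Finset.range a,
                if i < j then ((ℓ i : ℝ) - (ℓ j : ℝ)) ^ 2 else 1) *
            ∏ i ∈ Finset.range a,
              (Nat.choose (a + b - 1) (ℓ i) : ℝ) * p ^ (ℓ i) *
                (1 - p) ^ (a + b - 1 - ℓ i) := by
  have hxy : (0:ℝ) < x * y := mul_pos hx hy
  have h1xy : (0:ℝ) < 1 + x * y := by linarith
  set N := a + b - 1 with hN
  set Da : ℝ := ∏ i ∈ range a, ∏ j ∈ range a, if i < j then ((j:ℝ) - i) else 1 with hDa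
  set Db : ℝ := ∏ i ∈ range b, ∏ j ∈ range b, if i < j then ((j:ℝ) - i) else 1 with hDb
  set Qid : ℝ := ∏ u ∈ range (N+1), ∏ v ∈ range (N+1), auxHd u v with hQid
  set T0 : ℕ := ∑ i ∈ range a, (a - 1 - i) with hT0
  have hDa_pos : 0 < Da := by
    apply Finset.prod_pos; intro i _; apply Finset.prod_pos; intro j _
    split
    · rename_i h; have : (i:ℝ) < j := by exact_mod_cast h
      linarith
    · norm_num
  have hDb_pos : 0 < Db := by
    apply Finset.prod_pos; intro i _; apply Finset.prod_pos; intro j _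
    split
    · rename_i h; have : (i:ℝ) < j := by exact_mod_cast h
      linarith
    · norm_num
  have hQid_pos : 0 < Qid := by
    apply Finset.prod_pos; intro u _; apply Finset.prod_pos; intro v _; exact auxHd_pos u v
  refine ⟨Real.sqrt Qid * (1+x*y)^(a*N) / ((x*y)^T0 * ((N.factorial : ℝ))^a * Da * Db), ?_, ?_⟩
  · apply div_pos
    · exact mul_pos (Real.sqrt_pos.mpr hQid_pos) (pow_pos h1xy _)
    · have : (0:ℝ) < (N.factorial : ℝ) := by exact_mod_cast N.factorial_pos
      positivity
  intro lam hmono hzero hleb p ℓ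
  have hℓdef : ∀ i : ℕ, ℓ i = a - 1 - i + lam i := fun _ => rfl
  have hpdef : p = x * y / (1 + x * y) := rfl
  set μ := conjPart a lam with hμ
  set m : ℕ → ℕ := fun j => b - 1 - j + μ j with hm
  have hμmono : ∀ j k : ℕ, j ≤ k → μ k ≤ μ j := by
    intro j k hjk
    apply Finset.card_le_card
    intro i hi
    simp only [Finset.mem_filter] at *
    exact ⟨hi.1, lt_of_le_of_lt hjk hi.2⟩
  have hμa : ∀ j : ℕ, μ j ≤ a := by
    intro j
    calc μ j ≤ (range a).card := Finset.card_le_card (Finset.filter_subset _ _)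
    _ = a := Finset.card_range a
  have hμlow : ∀ i : ℕ, i < a → ∀ j : ℕ, j < lam i → i + 1 ≤ μ j := by
    intro i hi j hj
    have hsub : range (i+1) ⊆ (range a).filter fun i' => j < lam i' := by
      intro i' hi'
      simp only [Finset.mem_range] at hi'
      simp only [Finset.mem_filter, Finset.mem_range]
      exact ⟨by omega, lt_of_lt_of_le hj (hmono i' i (by omega))⟩
    calc i + 1 = (range (i+1)).card := (Finset.card_range _).symm
    _ ≤ _ := Finset.card_le_card hsub
  have hμhigh : ∀ i j : ℕ, lam i ≤ j → μ j ≤ i := by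
    intro i j hj
    have hsub : ((range a).filter fun i' => j < lam i') ⊆ range i := by
      intro i' hi'
      simp only [Finset.mem_filter, Finset.mem_range] at hi'
      simp only [Finset.mem_range]
      by_contra hcon
      have : lam i' ≤ lam i := hmono i i' (by omega)
      omega
    calc μ j ≤ (range i).card := Finset.card_le_card hsub
    _ = i := Finset.card_range i
  have hkey : ∀ i : ℕ, i < a → ∀ j : ℕ, j < b → ℓ i + m j ≠ N := by
    intro i hi j hj
    rw [hℓdef]
    show ¬(a - 1 - i + lam i + (b - 1 - j + μ j) = N)
    by_cases hc : j < lam i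
    · have h1 := hμlow i hi j hc
      omega
    · have h2 := hμhigh i j (by omega)
      omega
  have hℓle : ∀ i : ℕ, i < a → ℓ i ≤ N := by
    intro i hi; have := hleb i; rw [hℓdef]; omega
  have hmle : ∀ j : ℕ, j < b → m j ≤ N := by
    intro j hj; have := hμa j; show b - 1 - j + μ j ≤ N; omega
  have hℓanti : ∀ i j : ℕ, i < j → j < a → ℓ j < ℓ i := by
    intro i j hij hj
    have := hmono i j (by omega)
    rw [hℓdef, hℓdef]; omega
  have hmanti : ∀ i j : ℕ, i < j → j < b → m j < m i := by
    intro i j hij hj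
    have := hμmono i j (by omega)
    show b - 1 - j + μ j < b - 1 - i + μ i; omega
  set g : ℕ → ℕ := fun k => if k < a then ℓ k else N - m (k - a) with hg
  have hga : ∀ i : ℕ, i < a → g i = ℓ i := by intro i hi; simp only [hg, if_pos hi]
  have hgb : ∀ j : ℕ, g (a + j) = N - m j := by
    intro j
    simp only [hg, if_neg (by omega : ¬ a + j < a), Nat.add_sub_cancel_left]
  have hℓinj : ∀ i i' : ℕ, i < a → i' < a → ℓ i = ℓ i' → i = i' := by
    intro i i' hi hi' hE
    rcases lt_trichotomy i i' with h | h | h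
    · exact absurd hE (by have := hℓanti i i' h hi'; omega)
    · exact h
    · exact absurd hE (by have := hℓanti i' i h hi; omega)
  have hminj : ∀ j j' : ℕ, j < b → j' < b → m j = m j' → j = j' := by
    intro j j' hj hj' hE
    rcases lt_trichotomy j j' with h | h | h
    · exact absurd hE (by have := hmanti j j' h hj'; omega)
    · exact h
    · exact absurd hE (by have := hmanti j' j h hj; omega)
  have hginj : Set.InjOn g ↑(range (a+b)) := by
    intro u hu v hv hE
    simp only [Finset.coe_range, Set.mem_Iio] at hu hv
    by_cases hua : u < a <;> by_cases hva : v < a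
    · rw [hga u hua, hga v hva] at hE
      exact hℓinj u v hua hva hE
    · rw [hga u hua] at hE
      have hvb : v - a < b := by omega
      have : g v = N - m (v - a) := by simp only [hg, if_neg hva]
      rw [this] at hE
      have := hmle (v - a) hvb
      have : ℓ u + m (v - a) = N := by omega
      exact absurd this (hkey u hua (v - a) hvb)
    · rw [hga v hva] at hE
      have hub : u - a < b := by omega
      have : g u = N - m (u - a) := by simp only [hg, if_neg hua]
      rw [this] at hE
      have := hmle (u - a) hub
      have : ℓ v + m (u - a) = N := by omega
      exact absurd this (hkey v hva (u - a) hub)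
    · have h1 : g u = N - m (u - a) := by simp only [hg, if_neg hua]
      have h2 : g v = N - m (v - a) := by simp only [hg, if_neg hva]
      rw [h1, h2] at hE
      have hub : u - a < b := by omega
      have hvb : v - a < b := by omega
      have e1 := hmle (u - a) hub
      have e2 := hmle (v - a) hvb
      have : m (u - a) = m (v - a) := by omega
      have := hminj _ _ hub hvb this
      omega
  have hgim : (range (a+b)).image g = range (N+1) := by
    apply Finset.eq_of_subset_of_card_le
    · intro u hu
      simp only [Finset.mem_image, Finset.mem_range] at hu ⊢
      obtain ⟨k, hk, rfl⟩ := hu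
      by_cases hka : k < a
      · rw [hga k hka]; have := hℓle k hka; omega
      · have : g k = N - m (k - a) := by simp only [hg, if_neg hka]
        rw [this]; omega
    · rw [Finset.card_range, Finset.card_image_of_injOn hginj, Finset.card_range]
      omega
  set Dl : ℝ := ∏ i ∈ range a, ∏ j ∈ range a, if i < j then ((ℓ i:ℝ) - ℓ j) else 1 with hDl
  set Dm : ℝ := ∏ i ∈ range b, ∏ j ∈ range b, if i < j then ((m i:ℝ) - m j) else 1 with hDm
  set Cr : ℝ := ∏ i ∈ range a, ∏ j ∈ range b, auxHd (ℓ i) (N - m j) with hCr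
  set Fp : ℝ := ∏ i ∈ range a, (((ℓ i).factorial : ℝ) * ((N - ℓ i).factorial : ℝ)) with hFp
  have hCr_pos : 0 < Cr := by
    apply Finset.prod_pos; intro i _; apply Finset.prod_pos; intro j _; exact auxHd_pos _ _
  have hDl_pos : 0 < Dl := by
    apply Finset.prod_pos; intro i hi; apply Finset.prod_pos; intro j hj
    simp only [Finset.mem_range] at hi hj
    split
    · rename_i h
      have := hℓanti i j h hj
      have : (ℓ j : ℝ) < ℓ i := by exact_mod_cast this
      linarith
    · norm_num
  have hDm_pos : 0 < Dm := by
    apply Finset.prod_pos; intro i hi; apply Finset.prod_pos; intro j hj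
    simp only [Finset.mem_range] at hi hj
    split
    · rename_i h
      have := hmanti i j h hj
      have : (m j : ℝ) < m i := by exact_mod_cast this
      linarith
    · norm_num
  have hFp_pos : 0 < Fp := by
    apply Finset.prod_pos; intro i _
    have h1 : (0:ℝ) < ((ℓ i).factorial : ℝ) := by exact_mod_cast (ℓ i).factorial_pos
    have h2 : (0:ℝ) < ((N - ℓ i).factorial : ℝ) := by exact_mod_cast (N - ℓ i).factorial_pos
    exact mul_pos h1 h2
  have hQl : ∏ i ∈ range a, ∏ j ∈ range a, auxHd (ℓ i) (ℓ j) = Dl^2 :=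
    aux_Q_sq ℓ a hℓanti
  have hQm : ∏ i ∈ range b, ∏ j ∈ range b, auxHd (m i) (m j) = Dm^2 :=
    aux_Q_sq m b hmanti
  have hinner : ∀ s : ℕ, ∏ k ∈ range (N+1), auxHd s k
      = (∏ j ∈ range a, auxHd s (ℓ j)) * ∏ j ∈ range b, auxHd s (N - m j) := by
    intro s
    rw [← hgim, aux_reindex_single g (a+b) hginj, Finset.prod_range_add]
    congr 1
    · exact Finset.prod_congr rfl fun j hj => by
        rw [hga j (Finset.mem_range.mp hj)]
    · exact Finset.prod_congr rfl fun j _ => by rw [hgb j]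
  have hsplit : Qid = Dl^2 * Cr * (Cr * Dm^2) := by
    rw [hQid, ← hgim, aux_reindex g (a+b) hginj]
    have step : ∀ i ∈ range (a+b), ∏ j ∈ range (a+b), auxHd (g i) (g j)
        = (∏ j ∈ range a, auxHd (g i) (ℓ j)) * ∏ j ∈ range b, auxHd (g i) (N - m j) := by
      intro i _
      rw [Finset.prod_range_add]
      congr 1
      · exact Finset.prod_congr rfl fun j hj => by rw [hga j (Finset.mem_range.mp hj)]
      · exact Finset.prod_congr rfl fun j _ => by rw [hgb j]
    rw [Finset.prod_congr rfl step, Finset.prod_range_add, Finset.prod_mul_distrib,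
      Finset.prod_mul_distrib]
    have t1 : ∏ i ∈ range a, ∏ j ∈ range a, auxHd (g i) (ℓ j) = Dl^2 := by
      rw [← hQl]
      exact Finset.prod_congr rfl fun i hi => by
        rw [hga i (Finset.mem_range.mp hi)]
    have t2 : ∏ i ∈ range a, ∏ j ∈ range b, auxHd (g i) (N - m j) = Cr := by
      exact Finset.prod_congr rfl fun i hi => by
        rw [hga i (Finset.mem_range.mp hi)]
    have t3 : ∏ i ∈ range b, ∏ j ∈ range a, auxHd (g (a + i)) (ℓ j) = Cr := by
      have e : ∀ i ∈ range b, ∀ j ∈ range a,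
          auxHd (g (a + i)) (ℓ j) = auxHd (ℓ j) (N - m i) := by
        intro i _ j _
        rw [hgb i, auxHd_symm]
      rw [Finset.prod_congr rfl fun i hi => Finset.prod_congr rfl fun j hj => e i hi j hj]
      rw [Finset.prod_comm]
    have t4 : ∏ i ∈ range b, ∏ j ∈ range b, auxHd (g (a + i)) (N - m j) = Dm^2 := by
      rw [← hQm]
      apply Finset.prod_congr rfl
      intro i hi
      rw [hgb i]
      apply Finset.prod_congr rfl
      intro j hj
      exact auxHd_compl N (m i) (m j) (hmle i (Finset.mem_range.mp hi))
        (hmle j (Finset.mem_range.mp hj))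
    rw [t1, t2, t3, t4]
  have hFp_eq : Fp = Dl^2 * Cr := by
    rw [hFp]
    have e : ∀ i ∈ range a, ((ℓ i).factorial : ℝ) * ((N - ℓ i).factorial : ℝ)
        = (∏ j ∈ range a, auxHd (ℓ i) (ℓ j)) * ∏ j ∈ range b, auxHd (ℓ i) (N - m j) := by
      intro i hi
      rw [← aux_fact N (ℓ i) (hℓle i (Finset.mem_range.mp hi)), hinner]
    rw [Finset.prod_congr rfl e, Finset.prod_mul_distrib, hQl]
  have hDmF : Dm * Fp = Real.sqrt Qid * Dl := by
    have hsq : (Dm * Fp)^2 = (Real.sqrt Qid * Dl)^2 := by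
      rw [mul_pow, mul_pow, Real.sq_sqrt hQid_pos.le, hsplit, hFp_eq]
      ring
    have h1 : 0 ≤ Dm * Fp := le_of_lt (mul_pos hDm_pos hFp_pos)
    have h2 : 0 ≤ Real.sqrt Qid * Dl := mul_nonneg (Real.sqrt_nonneg _) hDl_pos.le
    calc Dm * Fp = Real.sqrt ((Dm * Fp)^2) := (Real.sqrt_sq h1).symm
    _ = Real.sqrt ((Real.sqrt Qid * Dl)^2) := by rw [hsq]
    _ = Real.sqrt Qid * Dl := Real.sqrt_sq h2
  set S : ℕ := ∑ i ∈ range a, lam i with hS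
  have hsumμ : ∑ j ∈ range b, μ j = S := by
    rw [hS]
    have e1 : ∀ j ∈ range b, μ j = ∑ i ∈ range a, if j < lam i then 1 else 0 := by
      intro j _
      rw [hμ]
      exact Finset.card_filter _ _
    rw [Finset.sum_congr rfl e1, Finset.sum_comm]
    apply Finset.sum_congr rfl
    intro i _
    rw [← Finset.card_filter]
    have : (range b).filter (fun j => j < lam i) = range (lam i) := by
      ext k
      simp only [Finset.mem_filter, Finset.mem_range]
      have := hleb i
      omega
    rw [this, Finset.card_range]
  have hsumℓ : ∑ i ∈ range a, ℓ i = T0 + S := by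
    rw [hT0, hS, ← Finset.sum_add_distrib]
  have hcastℓ : ∀ i : ℕ, i < a → ((ℓ i : ℕ) : ℝ) = (a:ℝ) - 1 - i + lam i := by
    intro i hi
    rw [hℓdef]
    rw [Nat.cast_add, Nat.cast_sub (by omega : i ≤ a - 1), Nat.cast_sub ha]
    push_cast
    ring
  have hcastm : ∀ j : ℕ, j < b → ((m j : ℕ) : ℝ) = (b:ℝ) - 1 - j + μ j := by
    intro j hj
    show (((b - 1 - j) + μ j : ℕ) : ℝ) = _
    rw [Nat.cast_add, Nat.cast_sub (by omega : j ≤ b - 1), Nat.cast_sub hb]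
    push_cast
    ring
  have hPa : schurVal a x lam = x ^ S * (Dl / Da) := by
    rw [schurVal, hS]
    congr 1
    rw [eq_div_iff (ne_of_gt hDa_pos), hDa, hDl, ← Finset.prod_mul_distrib]
    apply Finset.prod_congr rfl
    intro i hi
    rw [← Finset.prod_mul_distrib]
    apply Finset.prod_congr rfl
    intro j hj
    simp only [Finset.mem_range] at hi hj
    by_cases h : i < j
    · rw [if_pos h, if_pos h, if_pos h,
        div_mul_cancel₀ _ (by
          have : (i:ℝ) < j := by exact_mod_cast h
          exact sub_ne_zero.mpr (by linarith)),
        hcastℓ i hi, hcastℓ j hj]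
      ring
    · rw [if_neg h, if_neg h, if_neg h, mul_one]
  have hPb : schurVal b y μ = y ^ S * (Dm / Db) := by
    rw [schurVal, hsumμ]
    congr 1
    rw [eq_div_iff (ne_of_gt hDb_pos), hDb, hDm, ← Finset.prod_mul_distrib]
    apply Finset.prod_congr rfl
    intro i hi
    rw [← Finset.prod_mul_distrib]
    apply Finset.prod_congr rfl
    intro j hj
    simp only [Finset.mem_range] at hi hj
    by_cases h : i < j
    · rw [if_pos h, if_pos h, if_pos h,
        div_mul_cancel₀ _ (by
          have : (i:ℝ) < j := by exact_mod_cast h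
          exact sub_ne_zero.mpr (by linarith)),
        hcastm i hi, hcastm j hj]
      ring
    · rw [if_neg h, if_neg h, if_neg h, mul_one]
  have h1p : (1:ℝ) - p = 1/(1+x*y) := by
    rw [hpdef]; field_simp; ring
  have hfac : ∀ i ∈ range a, (Nat.choose N (ℓ i) : ℝ) * p ^ ℓ i * (1 - p) ^ (N - ℓ i)
      = (N.factorial:ℝ) * (x*y)^(ℓ i)
        / ((((ℓ i).factorial:ℝ) * ((N - ℓ i).factorial:ℝ)) * (1+x*y)^N) := by
    intro i hi
    have hiN := hℓle i (Finset.mem_range.mp hi)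
    have hch : (N.choose (ℓ i) : ℝ) * ((ℓ i).factorial:ℝ) * ((N - ℓ i).factorial:ℝ)
        = (N.factorial:ℝ) := by
      exact_mod_cast congrArg (Nat.cast (R:=ℝ)) (Nat.choose_mul_factorial_mul_factorial hiN)
    have hpow : (1+x*y)^(ℓ i) * (1+x*y)^(N - ℓ i) = (1+x*y)^N := by
      rw [← pow_add]; congr 1; omega
    rw [h1p, hpdef, div_pow, div_pow, one_pow]
    rw [eq_div_iff (by positivity), div_eq_mul_inv, div_eq_mul_inv]
    rw [← hch, ← hpow]
    have e1 : (0:ℝ) < (1+x*y)^(ℓ i) := by positivity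
    have e2 : (0:ℝ) < (1+x*y)^(N - ℓ i) := by positivity
    field_simp
  have hK : ∏ i ∈ range a, (Nat.choose N (ℓ i) : ℝ) * p ^ ℓ i * (1 - p) ^ (N - ℓ i)
      = (N.factorial:ℝ)^a * (x*y)^(T0 + S) / (Fp * (1+x*y)^(a*N)) := by
    rw [Finset.prod_congr rfl hfac, Finset.prod_div_distrib, Finset.prod_mul_distrib,
      Finset.prod_mul_distrib, Finset.prod_const, Finset.prod_const, Finset.card_range,
      Finset.prod_pow_eq_pow_sum, hsumℓ, ← hFp, ← pow_mul, mul_comm N a]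
  have hV : (∏ i ∈ range a, ∏ j ∈ range a, if i < j then ((ℓ i:ℝ) - ℓ j)^2 else 1)
      = Dl^2 := by
    rw [hDl, ← Finset.prod_pow]
    apply Finset.prod_congr rfl
    intro i _
    rw [← Finset.prod_pow]
    apply Finset.prod_congr rfl
    intro j _
    split <;> simp
  have hDm_eq : Dm = Real.sqrt Qid * Dl / Fp := by
    rw [← hDmF]
    field_simp
  rw [hPa, hPb, hV, hK, hDm_eq]
  have hne1 : Da ≠ 0 := ne_of_gt hDa_pos
  have hne2 : Db ≠ 0 := ne_of_gt hDb_pos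
  have hne3 : Fp ≠ 0 := ne_of_gt hFp_pos
  have hne4 : (x*y) ≠ 0 := ne_of_gt hxy
  have hne5 : (1+x*y) ≠ 0 := ne_of_gt h1xy
  have hne6 : (N.factorial:ℝ) ≠ 0 := by exact_mod_cast N.factorial_pos.ne'
  field_simp
  ring
end
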